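/- Let f : ℤ_p → ℤ_p be a measure-preserving 1-Lipschitz function with van der Put coefficients B_m, and for p^{n−1} ≤ m ≤ p^n − 1 (n ≥ 2) write B_m = p^{n−1} b_m with b_m = b_{m0} + b_{m1} p + ⋯, b_{m0} ≠ 0. Then for every fixed j with 0 ≤ j ≤ p^{n−1} − 1, the residues b_{i p^{n−1}+j, 0} for i = 1, …, p−1 are pairwise distinct (a permutation of 1, …, p−1). -/

import Mathlib

open MeasureTheory Finset

namespace VDP

noncomputable instance (p : ℕ) [Fact p.Prime] : MeasurableSpace ℤ_[p] := borel _
instance (p : ℕ) [Fact p.Prime] : BorelSpace ℤ_[p] := ⟨rfl⟩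

/-- The Haar probability measure on `ℤ_[p]`. -/
noncomputable def haarZp (p : ℕ) [Fact p.Prime] : Measure ℤ_[p] :=
  Measure.addHaarMeasure ⊤

/-- `f` is 1-Lipschitz. -/
def IsLip (p : ℕ) [Fact p.Prime] (f : ℤ_[p] → ℤ_[p]) : Prop :=
  ∀ x y : ℤ_[p], ‖f x - f y‖ ≤ ‖x - y‖

/-- The van der Put basis function `χ(m, x)` on `ℤ_[p]` (with `⌊log_p 0⌋ = 0`). -/
noncomputable def chi (p : ℕ) [Fact p.Prime] (m : ℕ) (x : ℤ_[p]) : ℤ_[p] :=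
  if ‖x - (m : ℤ_[p])‖ ≤ ((p : ℝ) ^ (Nat.log p m + 1))⁻¹ then 1 else 0

/-- `q(m) = m_s p^s`, the leading term of the `p`-adic expansion of `m`. -/
def q (p m : ℕ) : ℕ := m / p ^ Nat.log p m * p ^ Nat.log p m

/-- `f` has van der Put expansion with coefficients `B`. -/
def vdpExpansion (p : ℕ) [Fact p.Prime] (f : ℤ_[p] → ℤ_[p]) (B : ℕ → ℤ_[p]) : Prop :=
  ∀ x, f x = ∑' m, B m * chi p m x

/-- `f` is bijective modulo `p^n`. -/
def BijModPow (p : ℕ) [Fact p.Prime] (f : ℤ_[p] → ℤ_[p]) (n : ℕ) : Prop :=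
  Function.Bijective fun a : ZMod (p ^ n) => PadicInt.toZModPow n (f ((a.val : ℕ) : ℤ_[p]))

/-- `f` is transitive modulo `p^n`. -/
def TransModPow (p : ℕ) [Fact p.Prime] (f : ℤ_[p] → ℤ_[p]) (n : ℕ) : Prop :=
  ∀ x : ℤ_[p], ∀ a : ZMod (p ^ n), ∃ k : ℕ, PadicInt.toZModPow n (f^[k] x) = a

/-- The `i`-th digit of the canonical `p`-adic expansion of `x`. -/
noncomputable def digit (p : ℕ) [Fact p.Prime] (x : ℤ_[p]) (i : ℕ) : ℕ :=
  x.appr (i + 1) / p ^ i % p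

end VDP

open VDP MeasureTheory

section Aux
variable (p : ℕ) [hp : Fact p.Prime]

lemma aux_toZModPow_eq_iff (n : ℕ) (x y : ℤ_[p]) :
    PadicInt.toZModPow n x = PadicInt.toZModPow n y ↔ ‖x - y‖ ≤ (p : ℝ) ^ (-n : ℤ) := by
  rw [← sub_eq_zero, ← map_sub, ← RingHom.mem_ker, PadicInt.ker_toZModPow,
    ← PadicInt.norm_le_pow_iff_mem_span_pow]

lemma aux_chi_nat (k N : ℕ) :
    chi p k (N : ℤ_[p]) = if N % p ^ (Nat.log p k + 1) = k then 1 else 0 := by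
  have hk : k < p ^ (Nat.log p k + 1) := Nat.lt_pow_succ_log_self hp.out.one_lt k
  have key : (‖(N : ℤ_[p]) - (k : ℤ_[p])‖ ≤ ((p : ℝ) ^ (Nat.log p k + 1))⁻¹) ↔
      N % p ^ (Nat.log p k + 1) = k := by
    rw [show ((p : ℝ) ^ (Nat.log p k + 1))⁻¹ = (p : ℝ) ^ (-(Nat.log p k + 1 : ℕ) : ℤ) by
        rw [zpow_neg, zpow_natCast],
      show (N : ℤ_[p]) - (k : ℤ_[p]) = (((N : ℤ) - (k : ℤ) : ℤ) : ℤ_[p]) by push_cast; ring,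
      PadicInt.norm_int_le_pow_iff_dvd,
      show ((p : ℤ) ^ (Nat.log p k + 1)) = ((p ^ (Nat.log p k + 1) : ℕ) : ℤ) by push_cast; ring,
      ← Nat.modEq_iff_dvd]
    unfold Nat.ModEq
    rw [Nat.mod_eq_of_lt hk]
    exact eq_comm
  unfold chi
  exact if_congr key rfl rfl

lemma aux_chi_stable {m : ℕ} (hm : p ≤ m) {k : ℕ} (hk : k ≠ m) :
    chi p k (m : ℤ_[p]) = chi p k ((m % p ^ Nat.log p m : ℕ) : ℤ_[p]) := by
  have hp1 : 1 < p := hp.out.one_lt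
  set L := Nat.log p m with hL
  have hL1 : 1 ≤ L := Nat.log_pos hp1 hm
  set t := Nat.log p k + 1 with ht
  rw [aux_chi_nat, aux_chi_nat]
  have key : (m % p ^ t = k) ↔ ((m % p ^ L) % p ^ t = k) := by
    constructor
    · intro h
      have hmt : p ^ t ≤ m := by
        by_contra hlt
        push_neg at hlt
        rw [Nat.mod_eq_of_lt hlt] at h
        exact hk h.symm
      have htL : t ≤ L := (Nat.le_log_iff_pow_le hp1 (by omega)).mpr hmt
      rw [Nat.mod_mod_of_dvd _ (pow_dvd_pow p htL), h]
    · intro h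
      have htL : t ≤ L := by
        by_contra hgt
        push_neg at hgt
        have hrlt : m % p ^ L < p ^ t :=
          lt_of_lt_of_le (Nat.mod_lt _ (pow_pos (by omega) L))
            (Nat.pow_le_pow_right (by omega) (le_of_lt hgt))
        rw [Nat.mod_eq_of_lt hrlt] at h
        have hk0 : k ≠ 0 := by
          intro h0
          rw [h0] at ht
          simp [Nat.log_zero_right] at ht
          omega
        have h1 : p ^ (t - 1) ≤ k := by
          have := Nat.pow_log_le_self p hk0
          have : p ^ Nat.log p k ≤ k := this
          have he : t - 1 = Nat.log p k := by omega
          rwa [he]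
        have h2 : p ^ L ≤ p ^ (t - 1) := Nat.pow_le_pow_right (by omega) (by omega)
        have h3 : m % p ^ L < p ^ L := Nat.mod_lt _ (pow_pos (by omega) L)
        omega
      rwa [Nat.mod_mod_of_dvd _ (pow_dvd_pow p htL)] at h
  exact if_congr key rfl rfl

lemma aux_B_eq (f : ℤ_[p] → ℤ_[p]) (B : ℕ → ℤ_[p]) (hB : vdpExpansion p f B)
    {m : ℕ} (hm : p ≤ m) :
    B m = f (m : ℤ_[p]) - f ((m % p ^ Nat.log p m : ℕ) : ℤ_[p]) := by
  have hp1 : 1 < p := hp.out.one_lt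
  set L := Nat.log p m with hL
  set r := m % p ^ L with hr
  have hrm : r < m :=
    lt_of_lt_of_le (Nat.mod_lt _ (pow_pos (by omega) L)) (Nat.pow_log_le_self p (by omega))
  have hsupp : ∀ N : ℕ, ∀ k : ℕ, N < k → B k * chi p k (N : ℤ_[p]) = 0 := by
    intro N k hk
    rw [aux_chi_nat, if_neg, mul_zero]
    intro h
    have := Nat.mod_le N (p ^ (Nat.log p k + 1))
    omega
  have ha : Summable (fun k => B k * chi p k (m : ℤ_[p])) :=
    summable_of_ne_finset_zero (s := Finset.range (m + 1))
      (fun k hk => hsupp m k (by simpa using hk))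
  have hc : Summable (fun k => B k * chi p k (r : ℤ_[p])) :=
    summable_of_ne_finset_zero (s := Finset.range (m + 1))
      (fun k hk => hsupp r k (by simp at hk; omega))
  rw [hB (m : ℤ_[p]), hB (r : ℤ_[p]), ← Summable.tsum_sub ha hc,
    tsum_eq_single m ?_]
  · rw [aux_chi_nat, aux_chi_nat, if_pos, if_neg]
    · ring
    · intro h
      have h1 : r < p ^ (Nat.log p m + 1) :=
        lt_of_lt_of_le (Nat.mod_lt _ (pow_pos (by omega) L))
          (Nat.pow_le_pow_right (by omega) (by omega))
      rw [Nat.mod_eq_of_lt h1] at h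
      omega
    · exact Nat.mod_eq_of_lt (Nat.lt_pow_succ_log_self hp1 m)
  · intro k hk
    rw [aux_chi_stable p hm hk]
    exact sub_self _

lemma aux_bij_mod (f : ℤ_[p] → ℤ_[p]) (hf : IsLip p f)
    (hmp : MeasurePreserving f (haarZp p) (haarZp p)) (n : ℕ) :
    Function.Bijective fun a : ZMod (p ^ n) =>
      PadicInt.toZModPow n (f ((a.val : ℕ) : ℤ_[p])) := by
  haveI : NeZero (p ^ n) := ⟨pow_ne_zero n hp.out.ne_zero⟩
  haveI : Fintype (ZMod (p ^ n)) := ZMod.fintype _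
  rw [← Finite.surjective_iff_bijective]
  intro c
  have hradpos : (0 : ℝ) < (p : ℝ) ^ (-n : ℤ) :=
    zpow_pos (by exact_mod_cast hp.out.pos) _
  set U := Metric.closedBall ((c.val : ℤ_[p])) ((p : ℝ) ^ (-n : ℤ)) with hU
  have hcv : PadicInt.toZModPow n ((c.val : ℕ) : ℤ_[p]) = c := by
    rw [map_natCast, ZMod.natCast_zmod_val]
  have hmem : ∀ x : ℤ_[p], x ∈ U ↔ PadicInt.toZModPow n x = c := by
    intro x
    rw [hU, Metric.mem_closedBall, dist_eq_norm, ← aux_toZModPow_eq_iff, hcv]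
  have hopen : IsOpen U := IsUltrametricDist.isOpen_closedBall _ (ne_of_gt hradpos)
  have hne : U.Nonempty := ⟨_, Metric.mem_closedBall_self (le_of_lt hradpos)⟩
  haveI : (haarZp p).IsAddHaarMeasure :=
    inferInstanceAs (Measure.addHaarMeasure ⊤).IsAddHaarMeasure
  have hpos : haarZp p U ≠ 0 := (hopen.measure_pos _ hne).ne'
  have hpre : haarZp p (f ⁻¹' U) ≠ 0 := by
    rw [hmp.measure_preimage hopen.measurableSet.nullMeasurableSet]
    exact hpos
  obtain ⟨x, hx⟩ := nonempty_of_measure_ne_zero hpre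
  set a := PadicInt.toZModPow n x with haa
  refine ⟨a, ?_⟩
  have h1 : ‖x - ((a.val : ℕ) : ℤ_[p])‖ ≤ (p : ℝ) ^ (-n : ℤ) := by
    rw [← aux_toZModPow_eq_iff, map_natCast, ZMod.natCast_zmod_val]
  have h2 : ‖f ((a.val : ℕ) : ℤ_[p]) - f x‖ ≤ (p : ℝ) ^ (-n : ℤ) := by
    refine le_trans (hf _ _) ?_
    rwa [norm_sub_rev] at h1
  have h3 := (aux_toZModPow_eq_iff p n _ _).mpr h2
  simp only []
  rw [h3]
  exact (hmem (f x)).mp hx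

lemma aux_digit_zero (x : ℤ_[p]) : digit p x 0 = x.appr 1 := by
  unfold digit
  rw [pow_zero, Nat.div_one]
  exact Nat.mod_eq_of_lt (lt_of_lt_of_le (PadicInt.appr_lt x 1) (by rw [pow_one]))

end Aux

open VDP MeasureTheory in
theorem stmt7 (p : ℕ) [Fact p.Prime] (f : ℤ_[p] → ℤ_[p]) (B : ℕ → ℤ_[p]) (b : ℕ → ℤ_[p])
    (hf : IsLip p f) (hB : vdpExpansion p f B)
    (hmp : MeasurePreserving f (haarZp p) (haarZp p))
    (n : ℕ) (hn : 2 ≤ n)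
    (hb : ∀ m : ℕ, p ^ (n - 1) ≤ m → m ≤ p ^ n - 1 →
      B m = (p : ℤ_[p]) ^ (n - 1) * b m ∧ digit p (b m) 0 ≠ 0) :
    ∀ j : ℕ, j ≤ p ^ (n - 1) - 1 → ∀ i i' : ℕ,
      1 ≤ i → i ≤ p - 1 → 1 ≤ i' → i' ≤ p - 1 → i ≠ i' →
      digit p (b (i * p ^ (n - 1) + j)) 0 ≠ digit p (b (i' * p ^ (n - 1) + j)) 0 := by
  intro j hj i i' hi1 hi2 hi'1 hi'2 hii hdig
  have hp1 : 1 < p := (‹Fact p.Prime›).out.one_lt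
  set P := p ^ (n - 1) with hP
  have hP1 : 1 ≤ P := Nat.one_le_pow _ _ (by omega)
  have hPn : p ^ n = P * p := by
    rw [hP, ← pow_succ]
    congr 1
    omega
  set m := i * P + j with hm
  set m' := i' * P + j with hm'
  -- basic bounds
  have hsplit : p * P = (p - 1) * P + P := by
    conv_lhs => rw [show p = (p - 1) + 1 by omega]
    rw [add_mul, one_mul]
  have bounds : ∀ i₀ : ℕ, 1 ≤ i₀ → i₀ ≤ p - 1 →
      P ≤ i₀ * P + j ∧ i₀ * P + j ≤ p ^ n - 1 := by
    intro i₀ h1 h2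
    have l1 : 1 * P ≤ i₀ * P := Nat.mul_le_mul_right P h1
    have l2 : i₀ * P ≤ (p - 1) * P := Nat.mul_le_mul_right P h2
    constructor
    · omega
    · have : p * P = P * p := Nat.mul_comm _ _
      omega
  obtain ⟨hm_lb, hm_ub⟩ := bounds i hi1 hi2
  obtain ⟨hm'_lb, hm'_ub⟩ := bounds i' hi'1 hi'2
  have hppos : 0 < p ^ n := pow_pos (by omega) n
  -- logs
  have hlt : ∀ {k : ℕ}, k ≤ p ^ n - 1 → k < p ^ ((n - 1) + 1) := by
    intro k hk
    have : p ^ ((n - 1) + 1) = p ^ n := by congr 1; omega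
    omega
  have hlog : Nat.log p m = n - 1 := Nat.log_eq_of_pow_le_of_lt_pow hm_lb (hlt hm_ub)
  have hlog' : Nat.log p m' = n - 1 := Nat.log_eq_of_pow_le_of_lt_pow hm'_lb (hlt hm'_ub)
  -- mods
  have hjP : j < P := by omega
  have hmod : m % P = j := by rw [hm, Nat.add_comm, Nat.add_mul_mod_self_right, Nat.mod_eq_of_lt hjP]
  have hmod' : m' % P = j := by rw [hm', Nat.add_comm, Nat.add_mul_mod_self_right, Nat.mod_eq_of_lt hjP]
  have hpm : p ≤ m := le_trans (by calc p = p ^ 1 := (pow_one p).symm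
    _ ≤ P := Nat.pow_le_pow_right (by omega) (by omega)) hm_lb
  have hpm' : p ≤ m' := le_trans (by calc p = p ^ 1 := (pow_one p).symm
    _ ≤ P := Nat.pow_le_pow_right (by omega) (by omega)) hm'_lb
  -- B formulas
  have hBm : B m = f (m : ℤ_[p]) - f (j : ℤ_[p]) := by
    have e : m % p ^ Nat.log p m = j := by rw [hlog, ← hP, hmod]
    rw [aux_B_eq p f B hB hpm, e]
  have hBm' : B m' = f (m' : ℤ_[p]) - f (j : ℤ_[p]) := by
    have e : m' % p ^ Nat.log p m' = j := by rw [hlog', ← hP, hmod']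
    rw [aux_B_eq p f B hB hpm', e]
  obtain ⟨hBbm, -⟩ := hb m hm_lb hm_ub
  obtain ⟨hBbm', -⟩ := hb m' hm'_lb hm'_ub
  -- digit equality gives norm bound
  rw [aux_digit_zero, aux_digit_zero] at hdig
  have hsub : b m - b m' ∈ Ideal.span {(p : ℤ_[p]) ^ 1} := by
    have e : b m - b m' = (b m - ((b m).appr 1 : ℤ_[p])) - (b m' - ((b m').appr 1 : ℤ_[p])) := by
      rw [hdig]; ring
    rw [e]
    exact Ideal.sub_mem _ (PadicInt.appr_spec 1 (b m)) (PadicInt.appr_spec 1 (b m'))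
  have hnorm1 : ‖b m - b m'‖ ≤ (p : ℝ) ^ (-(1 : ℕ) : ℤ) :=
    (PadicInt.norm_le_pow_iff_mem_span_pow _ 1).mpr hsub
  have hnormB : ‖B m - B m'‖ ≤ (p : ℝ) ^ (-n : ℤ) := by
    rw [hBbm, hBbm', ← mul_sub, norm_mul, PadicInt.norm_p_pow]
    calc (p : ℝ) ^ (-(n - 1 : ℕ) : ℤ) * ‖b m - b m'‖
        ≤ (p : ℝ) ^ (-(n - 1 : ℕ) : ℤ) * (p : ℝ) ^ (-(1 : ℕ) : ℤ) := by
          apply mul_le_mul_of_nonneg_left hnorm1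
          positivity
      _ = (p : ℝ) ^ (-n : ℤ) := by
          rw [← zpow_add₀ (by exact_mod_cast (by omega : p ≠ 0) : (p : ℝ) ≠ 0)]
          congr 1
          have : ((n - 1 : ℕ) : ℤ) = (n : ℤ) - 1 := by
            rw [Nat.cast_sub (by omega)]; simp
          omega
  -- project mod p^n
  have hT : PadicInt.toZModPow n (B m) = PadicInt.toZModPow n (B m') :=
    (aux_toZModPow_eq_iff p n _ _).mpr hnormB
  rw [hBm, hBm'] at hT
  simp only [map_sub] at hT
  have hfmm' : PadicInt.toZModPow n (f (m : ℤ_[p])) = PadicInt.toZModPow n (f (m' : ℤ_[p])) :=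
    sub_left_injective hT
  -- apply bijectivity mod p^n
  haveI : NeZero (p ^ n) := ⟨by omega⟩
  have hbij := aux_bij_mod p f hf hmp n
  have hvm : ((m : ZMod (p ^ n)).val : ℕ) = m := ZMod.val_natCast_of_lt (by omega)
  have hvm' : ((m' : ZMod (p ^ n)).val : ℕ) = m' := ZMod.val_natCast_of_lt (by omega)
  have heq : (m : ZMod (p ^ n)) = (m' : ZMod (p ^ n)) := by
    apply hbij.injective
    show PadicInt.toZModPow n (f (((m : ZMod (p ^ n)).val : ℕ) : ℤ_[p])) =
      PadicInt.toZModPow n (f (((m' : ZMod (p ^ n)).val : ℕ) : ℤ_[p]))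
    rw [hvm, hvm']
    exact hfmm'
  have : m = m' := by
    have := congrArg ZMod.val heq
    rwa [hvm, hvm'] at this
  have : i * P = i' * P := by omega
  exact hii (Nat.eq_of_mul_eq_mul_right (by omega) this)
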